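/- Let 𝒪 be a principal ideal domain, let A be an ℓ×k matrix over 𝒪 with k < ℓ and rank k, and let v_1,…,v_r ∈ 𝒪^ℓ. For an ℓ×(k+1) matrix B, let μ(B) denote the gcd of all (k+1)×(k+1) minors of B (the product of its elementary divisors). Then: (i) for every v in the 𝒪-span of v_1,…,v_r, the gcd N := gcd(μ([A|v_1]), …, μ([A|v_r])) divides μ([A|v]); and (ii) there exist q_1,…,q_r ∈ 𝒪 such that, with v = q_1 v_1 + ⋯ + q_r v_r, one has μ([A|v]) = N (up to associates). -/
import Mathlib


/-- `μ(B)`: the gcd of all maximal (`m×m`) minors of an `l×m` matrix `B` (equivalently, the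
product of its elementary divisors). -/
noncomputable def gcdMaxMinors {O : Type*} [CommRing O] [IsDomain O] [NormalizedGCDMonoid O]
    {l m : ℕ} (B : Matrix (Fin l) (Fin m) O) : O :=
  (Finset.univ.powersetCard m).gcd fun s =>
    if h : s.card = m then
      (B.submatrix (fun i : Fin m => ((s.orderIsoOfFin h) i).1) id).det
    else 0

/-- The matrix `[A|v]`: `A` augmented by the column `v`. -/
def augmentCol {O : Type*} {l k : ℕ} (A : Matrix (Fin l) (Fin k) O) (v : Fin l → O) :
    Matrix (Fin l) (Fin (k + 1)) O :=
  Matrix.of fun i => Fin.snoc (A i) (v i)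

section Aux

variable {O : Type*} [CommRing O] {l k : ℕ}

/-- The maximal minor of `[A|v]` with rows in `t`, as a function of `v`. -/
noncomputable def Dfun (A : Matrix (Fin l) (Fin k) O) (t : Finset (Fin l)) (v : Fin l → O) : O :=
  if h : t.card = k + 1 then
    ((augmentCol A v).submatrix (fun i : Fin (k + 1) => ((t.orderIsoOfFin h) i).1) id).det
  else 0

lemma gcdMaxMinors_augment [IsDomain O] [NormalizedGCDMonoid O]
    (A : Matrix (Fin l) (Fin k) O) (v : Fin l → O) :
    gcdMaxMinors (augmentCol A v) =
      (Finset.univ.powersetCard (k + 1)).gcd (fun t => Dfun A t v) := rfl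

lemma augment_submatrix_eq (A : Matrix (Fin l) (Fin k) O) (f : Fin (k + 1) → Fin l)
    (v w : Fin l → O) :
    (augmentCol A v).submatrix f id =
      ((augmentCol A w).submatrix f id).updateCol (Fin.last k) (fun i => v (f i)) := by
  funext i j
  refine Fin.lastCases ?_ ?_ j
  · simp [augmentCol, Matrix.updateCol_apply]
  · intro j'
    simp [augmentCol, Matrix.updateCol_apply, (Fin.castSucc_lt_last j').ne]

lemma Dfun_add (A : Matrix (Fin l) (Fin k) O) (t : Finset (Fin l)) (v w : Fin l → O) :
    Dfun A t (v + w) = Dfun A t v + Dfun A t w := by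
  unfold Dfun
  split
  next h =>
    set f := fun i : Fin (k + 1) => ((t.orderIsoOfFin h) i).1 with hf
    rw [augment_submatrix_eq A f (v + w) 0, augment_submatrix_eq A f v 0,
      augment_submatrix_eq A f w 0]
    have : (fun i => (v + w) (f i)) = (fun i => v (f i)) + (fun i => w (f i)) := rfl
    rw [this, Matrix.det_updateCol_add]
  next => simp

lemma Dfun_smul (A : Matrix (Fin l) (Fin k) O) (t : Finset (Fin l)) (c : O) (v : Fin l → O) :
    Dfun A t (c • v) = c * Dfun A t v := by
  unfold Dfun
  split
  next h =>
    set f := fun i : Fin (k + 1) => ((t.orderIsoOfFin h) i).1 with hf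
    rw [augment_submatrix_eq A f (c • v) 0, augment_submatrix_eq A f v 0]
    have : (fun i => (c • v) (f i)) = c • (fun i => v (f i)) := rfl
    rw [this, Matrix.det_updateCol_smul]
  next => simp

lemma Dfun_zero (A : Matrix (Fin l) (Fin k) O) (t : Finset (Fin l)) :
    Dfun A t 0 = 0 := by
  have h := Dfun_smul A t 0 0
  simpa using h

/-- The linear map `q ↦ (μ-minors of [A | Σ q s • v s])`. -/
noncomputable def Psi (A : Matrix (Fin l) (Fin k) O) {r : ℕ} (v : Fin r → (Fin l → O)) :
    (Fin r → O) →ₗ[O] ({t : Finset (Fin l) // t ∈ Finset.univ.powersetCard (k + 1)} → O) where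
  toFun q t := Dfun A t.1 (∑ s, q s • v s)
  map_add' q q' := by
    funext t
    have h : (∑ s, (q + q') s • v s) = (∑ s, q s • v s) + (∑ s, q' s • v s) := by
      simp [add_smul, Finset.sum_add_distrib]
    show Dfun A t.1 (∑ s, (q + q') s • v s) = _
    rw [h, Dfun_add]
    rfl
  map_smul' c q := by
    funext t
    have h : (∑ s, (c • q) s • v s) = c • (∑ s, q s • v s) := by
      simp [smul_smul, Finset.smul_sum]
    show Dfun A t.1 (∑ s, (c • q) s • v s) = _
    rw [h, Dfun_smul]
    rfl

/-- In a PID, any submodule of `O^ι` contains an element whose content divides every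
entry of every element of the submodule. -/
lemma exists_gcd_dvd {O : Type*} [CommRing O] [IsDomain O] [IsPrincipalIdealRing O]
    [NormalizedGCDMonoid O] {ι : Type*} [Fintype ι] [DecidableEq ι]
    (N : Submodule O (ι → O)) :
    ∃ w ∈ N, ∀ x ∈ N, ∀ j, Finset.univ.gcd w ∣ x j := by
  obtain ⟨n, bM, bN, f, a, hsnf⟩ := N.smithNormalForm (Pi.basisFun O ι)
  set w : N := ∑ i, bN i with hw
  refine ⟨(w : ι → O), w.2, ?_⟩
  have hwc : (w : ι → O) = ∑ i, a i • bM (f i) := by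
    rw [hw]
    push_cast
    simp [hsnf]
  set g : O := Finset.univ.gcd ((w : ι → O)) with hg
  have hga : ∀ i₀, g ∣ a i₀ := by
    intro i₀
    have h1 : bM.repr (w : ι → O) (f i₀) = a i₀ := by
      rw [hwc, map_sum, Finset.sum_apply']
      simp [Finsupp.single_apply, f.injective.eq_iff]
    have h2 : g ∣ bM.repr (w : ι → O) (f i₀) := by
      rw [pi_eq_sum_univ ((w : ι → O)), map_sum, Finset.sum_apply']
      refine Finset.dvd_sum fun j _ => ?_
      rw [map_smul, Finsupp.smul_apply, smul_eq_mul]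
      exact (Finset.gcd_dvd (Finset.mem_univ j)).mul_right _
    rwa [h1] at h2
  intro x hx j
  have hxr : x = ∑ i, (bN.repr ⟨x, hx⟩ i) • ((bN i : ι → O)) := by
    have h := bN.sum_repr ⟨x, hx⟩
    have := congrArg (Subtype.val) h
    push_cast at this
    exact this.symm
  rw [hxr, Finset.sum_apply]
  refine Finset.dvd_sum fun i _ => ?_
  simp only [hsnf, Pi.smul_apply, smul_eq_mul]
  exact ((hga i).mul_right _).mul_left _

end Aux

/-- Let `𝒪` be a PID, `A` an `ℓ×k` matrix over `𝒪` with `k < ℓ` of rank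
`k`, and `v_1,…,v_r ∈ 𝒪^ℓ`.  With `N = gcd(μ([A|v_1]),…,μ([A|v_r]))`:
(i) for every `w` in the span of the `v_s`, `N ∣ μ([A|w])`; and
(ii) there are `q_1,…,q_r ∈ 𝒪` such that `μ([A|Σ q_s v_s])` is associated to `N`. -/
theorem stmt19 {O : Type*} [CommRing O] [IsDomain O] [IsPrincipalIdealRing O]
    [NormalizedGCDMonoid O]
    (l k r : ℕ) (hk : k < l) (A : Matrix (Fin l) (Fin k) O) (hrank : A.rank = k)
    (v : Fin r → (Fin l → O)) :
    (∀ w ∈ Submodule.span O (Set.range v),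
      (Finset.univ.gcd fun s : Fin r => gcdMaxMinors (augmentCol A (v s))) ∣
        gcdMaxMinors (augmentCol A w)) ∧
    ∃ q : Fin r → O,
      Associated (gcdMaxMinors (augmentCol A (∑ s, q s • v s)))
        (Finset.univ.gcd fun s : Fin r => gcdMaxMinors (augmentCol A (v s))) := by
  classical
  set Nval : O := Finset.univ.gcd fun s : Fin r => gcdMaxMinors (augmentCol A (v s)) with hN
  -- Part (i)
  have part1 : ∀ w ∈ Submodule.span O (Set.range v), Nval ∣ gcdMaxMinors (augmentCol A w) := by
    let Q : Submodule O (Fin l → O) :=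
      { carrier := {w | ∀ t ∈ Finset.univ.powersetCard (k + 1), Nval ∣ Dfun A t w}
        add_mem' := fun {x y} hx hy t ht => by
          rw [Dfun_add]; exact dvd_add (hx t ht) (hy t ht)
        zero_mem' := fun t ht => by rw [Dfun_zero]; exact dvd_zero _
        smul_mem' := fun c x hx t ht => by
          rw [Dfun_smul]; exact (hx t ht).mul_left c }
    have hle : Submodule.span O (Set.range v) ≤ Q := by
      rw [Submodule.span_le]
      rintro _ ⟨s, rfl⟩ t ht
      refine dvd_trans (Finset.gcd_dvd (Finset.mem_univ s)) ?_
      rw [gcdMaxMinors_augment]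
      exact Finset.gcd_dvd ht
    intro w hw
    rw [gcdMaxMinors_augment]
    exact Finset.dvd_gcd fun t ht => hle hw t ht
  refine ⟨part1, ?_⟩
  -- Part (ii)
  obtain ⟨w₀, hw₀N, hdvd⟩ := exists_gcd_dvd (LinearMap.range (Psi A v))
  obtain ⟨q, hq⟩ := LinearMap.mem_range.mp hw₀N
  refine ⟨q, associated_of_dvd_dvd ?_ ?_⟩
  · -- μ([A|Σ q s v s]) ∣ Nval
    have h3 : gcdMaxMinors (augmentCol A (∑ s, q s • v s)) ∣ Finset.univ.gcd w₀ := by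
      refine Finset.dvd_gcd fun j _ => ?_
      rw [← hq]
      show _ ∣ Dfun A j.1 (∑ s, q s • v s)
      rw [gcdMaxMinors_augment]
      exact Finset.gcd_dvd j.2
    refine Finset.dvd_gcd fun s _ => ?_
    rw [gcdMaxMinors_augment]
    refine Finset.dvd_gcd fun t ht => ?_
    have hxs : Psi A v (Pi.single s 1) ∈ LinearMap.range (Psi A v) :=
      LinearMap.mem_range_self _ _
    have h1 : Finset.univ.gcd w₀ ∣ Psi A v (Pi.single s 1) ⟨t, ht⟩ := hdvd _ hxs ⟨t, ht⟩
    have h2 : Psi A v (Pi.single s 1) ⟨t, ht⟩ = Dfun A t (v s) := by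
      show Dfun A t (∑ s', (Pi.single s 1 : Fin r → O) s' • v s') = _
      congr 1
      simp [Pi.single_apply, ite_smul]
    rw [h2] at h1
    exact h3.trans h1
  · -- Nval ∣ μ([A|Σ q s v s])
    exact part1 _ (Submodule.sum_mem _ fun s _ =>
      Submodule.smul_mem _ _ (Submodule.subset_span ⟨s, rfl⟩))
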